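/- arXiv:math-ph/0503048 — 3 statements merged into one kernel-verified Lean document; each statement's English description precedes it below -/
import Mathlib

section
/- Let A be an n×n complex matrix, C an m×m complex matrix, and B an n×m complex matrix, and suppose the block matrix M = fromBlocks A B Bᴴ C is positive semidefinite. Then det M, det A and det C are nonnegative real numbers and det M ≤ det A · det C (Fischer's inequality). -/
open Matrix
open scoped ComplexOrder

lemma psd_det_nonneg {k : Type*} [Fintype k] [DecidableEq k] {M : Matrix k k ℂ}
    (h : M.PosSemidef) : 0 ≤ M.det := by
  rw [h.1.det_eq_prod_eigenvalues, ← RCLike.ofReal_prod]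
  exact RCLike.ofReal_nonneg.2 (Finset.prod_nonneg fun i _ => h.eigenvalues_nonneg i)

lemma psd_det_le_one {k : Type*} [Fintype k] [DecidableEq k] {T : Matrix k k ℂ}
    (hT : T.PosSemidef) (h1 : (1 - T).PosSemidef) : T.det ≤ 1 := by
  rw [hT.1.det_eq_prod_eigenvalues, ← RCLike.ofReal_prod, ← RCLike.ofReal_one (K := ℂ),
    RCLike.ofReal_le_ofReal]
  apply Finset.prod_le_one
  · exact fun i _ => hT.eigenvalues_nonneg i
  · intro i _
    -- use the eigenvector
    set v : k → ℂ := ⇑(hT.1.eigenvectorBasis i) with hv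
    have hnorm : star v ⬝ᵥ v = 1 := by
      have h := hT.1.eigenvectorBasis.orthonormal.1 i
      have h2 : (inner ℂ (hT.1.eigenvectorBasis i) (hT.1.eigenvectorBasis i) : ℂ) = 1 := by
        rw [inner_self_eq_norm_sq_to_K, h]; norm_num
      rw [EuclideanSpace.inner_eq_star_dotProduct, dotProduct_comm] at h2
      exact h2
    have hTv : T *ᵥ v = (hT.1.eigenvalues i : ℂ) • v := by
      simpa using hT.1.mulVec_eigenvectorBasis i
    have h0 := h1.dotProduct_mulVec_nonneg v
    rw [sub_mulVec, one_mulVec, dotProduct_sub, hTv, dotProduct_smul, hnorm, smul_eq_mul,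
      mul_one, sub_nonneg] at h0
    exact_mod_cast h0

open scoped MatrixOrder in
lemma psd_det_mono {k : Type*} [Fintype k] [DecidableEq k] {X Y : Matrix k k ℂ}
    (hX : X.PosSemidef) (hXY : (Y - X).PosSemidef) : X.det ≤ Y.det := by
  have hY : Y.PosSemidef := by simpa using hXY.add hX
  by_cases hYd : IsUnit Y.det
  · -- Y invertible; use sqrt
    set R := CFC.sqrt Y with hR
    have hRH : R.IsHermitian := (CFC.sqrt_nonneg Y).posSemidef.1
    have hRR : R * R = Y := CFC.sqrt_mul_sqrt_self Y hY.nonneg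
    have hRd : IsUnit R.det := by
      have : R.det * R.det = Y.det := by rw [← det_mul, hRR]
      exact isUnit_of_mul_isUnit_left (this ▸ hYd)
    have hRinv : R * R⁻¹ = 1 := mul_nonsing_inv R hRd
    have hRinv' : R⁻¹ * R = 1 := nonsing_inv_mul R hRd
    have hRiH : (R⁻¹).IsHermitian := hRH.inv
    set T := R⁻¹ * X * R⁻¹ with hT
    have hTpsd : T.PosSemidef := by
      have := hX.mul_mul_conjTranspose_same R⁻¹
      rwa [hRiH.eq] at this
    have hYT : R⁻¹ * Y * R⁻¹ = 1 := by
      rw [← hRR, Matrix.mul_assoc, Matrix.mul_assoc, hRinv, Matrix.mul_one, hRinv']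
    have h1T : (1 - T).PosSemidef := by
      have := hXY.mul_mul_conjTranspose_same R⁻¹
      rwa [hRiH.eq, Matrix.mul_sub, Matrix.sub_mul, hYT] at this
    have hdet : X.det = T.det * Y.det := by
      have hXeq : X = R * T * R := by
        rw [hT, ← Matrix.mul_assoc, ← Matrix.mul_assoc, hRinv, Matrix.one_mul,
          Matrix.mul_assoc, hRinv', Matrix.mul_one]
      have h1 : X.det = R.det * T.det * R.det := by
        rw [hXeq, det_mul, det_mul]
      have h2 : Y.det = R.det * R.det := by rw [← hRR, det_mul]
      rw [h1, h2]; ring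
    rw [hdet]
    calc T.det * Y.det ≤ 1 * Y.det := by
          apply mul_le_mul_of_nonneg_right (psd_det_le_one hTpsd h1T) (psd_det_nonneg hY)
      _ = Y.det := one_mul _
  · -- Y singular: find kernel vector, show X singular too
    have hYd0 : Y.det = 0 := by simpa [isUnit_iff_ne_zero] using hYd
    obtain ⟨v, hv0, hv⟩ := Matrix.exists_mulVec_eq_zero_iff.mpr hYd0
    have h1 : star v ⬝ᵥ X *ᵥ v = 0 := by
      have h2 := hXY.dotProduct_mulVec_nonneg v
      rw [sub_mulVec, hv, zero_sub, dotProduct_neg, neg_nonneg] at h2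
      exact le_antisymm h2 (hX.dotProduct_mulVec_nonneg v)
    have hXv : X *ᵥ v = 0 := (hX.dotProduct_mulVec_zero_iff v).1 h1
    have : X.det = 0 := Matrix.exists_mulVec_eq_zero_iff.mp ⟨v, hv0, hXv⟩
    rw [this, hYd0]

/-- **Fischer's inequality**: if the block matrix `fromBlocks A B Bᴴ C` is positive
semidefinite, then its determinant, `det A` and `det C` are nonnegative (real) and
`det M ≤ det A * det C`. -/
theorem fischer_inequality {n m : ℕ}
    (A : Matrix (Fin n) (Fin n) ℂ) (B : Matrix (Fin n) (Fin m) ℂ)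
    (C : Matrix (Fin m) (Fin m) ℂ)
    (hM : (Matrix.fromBlocks A B Bᴴ C).PosSemidef) :
    0 ≤ (Matrix.fromBlocks A B Bᴴ C).det ∧ 0 ≤ A.det ∧ 0 ≤ C.det ∧
      (Matrix.fromBlocks A B Bᴴ C).det ≤ A.det * C.det := by
  have hA : A.PosSemidef := by
    have := hM.submatrix (Sum.inl : Fin n → Fin n ⊕ Fin m)
    have he : (fromBlocks A B Bᴴ C).submatrix Sum.inl Sum.inl = A := by
      ext i j; simp [submatrix_apply]
    rwa [he] at this
  have hC : C.PosSemidef := by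
    have := hM.submatrix (Sum.inr : Fin m → Fin n ⊕ Fin m)
    have he : (fromBlocks A B Bᴴ C).submatrix Sum.inr Sum.inr = C := by
      ext i j; simp [submatrix_apply]
    rwa [he] at this
  refine ⟨psd_det_nonneg hM, psd_det_nonneg hA, psd_det_nonneg hC, ?_⟩
  by_cases hAd : IsUnit A.det
  · haveI : Invertible A := A.invertibleOfIsUnitDet hAd
    have hApd : A.PosDef := by
      refine posDef_iff_dotProduct_mulVec.2 ⟨hA.1, fun x hx => ?_⟩
      rcases lt_or_eq_of_le (hA.dotProduct_mulVec_nonneg x) with h | h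
      · exact h
      · exfalso
        have hx0 : A *ᵥ x = 0 := (hA.dotProduct_mulVec_zero_iff x).1 h.symm
        have := Matrix.exists_mulVec_eq_zero_iff.mp ⟨x, hx, hx0⟩
        exact hAd.ne_zero this
    have hS : (C - Bᴴ * A⁻¹ * B).PosSemidef := (PosDef.fromBlocks₁₁ B C hApd).1 hM
    have hdet : (fromBlocks A B Bᴴ C).det = A.det * (C - Bᴴ * A⁻¹ * B).det := by
      rw [det_fromBlocks₁₁, invOf_eq_nonsing_inv]
    have hCS : (C - (C - Bᴴ * A⁻¹ * B)).PosSemidef := by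
      rw [sub_sub_cancel]
      have := (hApd.inv).posSemidef.conjTranspose_mul_mul_same B
      simpa using this
    have hle : (C - Bᴴ * A⁻¹ * B).det ≤ C.det := psd_det_mono hS hCS
    rw [hdet]
    exact mul_le_mul_of_nonneg_left hle (psd_det_nonneg hA)
  · have hAd0 : A.det = 0 := by simpa [isUnit_iff_ne_zero] using hAd
    obtain ⟨v, hv0, hv⟩ := Matrix.exists_mulVec_eq_zero_iff.mpr hAd0
    set w : Fin n ⊕ Fin m → ℂ := Sum.elim v 0 with hw
    have hw0 : w ≠ 0 := by
      intro h
      apply hv0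
      ext i
      have := congrFun h (Sum.inl i)
      simpa [hw] using this
    have hq : star w ⬝ᵥ (fromBlocks A B Bᴴ C) *ᵥ w = 0 := by
      rw [hw]
      simp [fromBlocks_mulVec, hv, Function.star_sumElim, dotProduct]
    have hMw : (fromBlocks A B Bᴴ C) *ᵥ w = 0 :=
      (hM.dotProduct_mulVec_zero_iff w).1 hq
    have hMdet : (fromBlocks A B Bᴴ C).det = 0 :=
      Matrix.exists_mulVec_eq_zero_iff.mp ⟨w, hw0, hMw⟩
    rw [hMdet, hAd0, zero_mul]
end

section
/- Let T = fromBlocks A B Bᴴ C be a Hermitian positive definite (n+m)×(n+m) complex matrix with blocks A (n×n), B (n×m), C (m×m). Then T and A are invertible, and the (1,1) block (T⁻¹)₁₁ of the inverse T⁻¹ satisfies (T⁻¹)₁₁ − A⁻¹ is positive semidefinite, i.e. A⁻¹ ≤ (T⁻¹)₁₁ in the Loewner order. -/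
open Matrix
open scoped ComplexOrder

/-- If `T = fromBlocks A B Bᴴ C` is positive definite, then `T` and `A` are invertible
and the upper-left block of `T⁻¹` dominates `A⁻¹` in the Loewner order:
`(T⁻¹)₁₁ - A⁻¹` is positive semidefinite. -/
theorem inv_fromBlocks_toBlocks₁₁_ge {n m : ℕ}
    (A : Matrix (Fin n) (Fin n) ℂ) (B : Matrix (Fin n) (Fin m) ℂ)
    (C : Matrix (Fin m) (Fin m) ℂ)
    (hT : (Matrix.fromBlocks A B Bᴴ C).PosDef) :
    IsUnit (Matrix.fromBlocks A B Bᴴ C) ∧ IsUnit A ∧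
      (((Matrix.fromBlocks A B Bᴴ C)⁻¹).toBlocks₁₁ - A⁻¹).PosSemidef := by
  have hA : A.PosDef := by
    refine Matrix.PosDef.of_dotProduct_mulVec_pos ?_ ?_
    · have h := congrArg Matrix.toBlocks₁₁ hT.1.eq
      simpa [Matrix.fromBlocks_conjTranspose, Matrix.IsHermitian] using h
    · intro x hx
      have hx' : Sum.elim x (0 : Fin m → ℂ) ≠ 0 := by
        intro h
        exact hx (funext fun i => congrFun h (Sum.inl i))
      have h := hT.dotProduct_mulVec_pos hx'
      simpa [Matrix.fromBlocks_mulVec, dotProduct, Fintype.sum_sum_type] using h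
  haveI : Invertible A := hA.isUnit.invertible
  haveI : Invertible (Matrix.fromBlocks A B Bᴴ C) := hT.isUnit.invertible
  haveI hSinv : Invertible (C - Bᴴ * ⅟A * B) :=
    Matrix.invertibleOfFromBlocks₁₁Invertible A B Bᴴ C
  have hiA : (⅟A : Matrix (Fin n) (Fin n) ℂ) = A⁻¹ := invOf_eq_nonsing_inv A
  have hS : (C - Bᴴ * A⁻¹ * B).PosSemidef :=
    (Matrix.PosDef.fromBlocks₁₁ B C hA).mp hT.posSemidef
  have hSeq : C - Bᴴ * ⅟A * B = C - Bᴴ * A⁻¹ * B := by rw [hiA]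
  haveI hSinv' : Invertible (C - Bᴴ * A⁻¹ * B) := hSeq ▸ hSinv
  have hSinvPSD : (C - Bᴴ * A⁻¹ * B)⁻¹.PosSemidef := by
    have h1 : (((C - Bᴴ * A⁻¹ * B)⁻¹)ᴴ * (C - Bᴴ * A⁻¹ * B) * (C - Bᴴ * A⁻¹ * B)⁻¹).PosSemidef :=
      hS.conjTranspose_mul_mul_same _
    have h2 : ((C - Bᴴ * A⁻¹ * B)⁻¹)ᴴ * (C - Bᴴ * A⁻¹ * B) * (C - Bᴴ * A⁻¹ * B)⁻¹ =
        (C - Bᴴ * A⁻¹ * B)⁻¹ := by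
      rw [Matrix.conjTranspose_nonsing_inv, hS.1.eq, ← invOf_eq_nonsing_inv,
        invOf_mul_self, Matrix.one_mul]
    rwa [h2] at h1
  refine ⟨hT.isUnit, hA.isUnit, ?_⟩
  have hinv : (Matrix.fromBlocks A B Bᴴ C)⁻¹ = ⅟(Matrix.fromBlocks A B Bᴴ C) :=
    (invOf_eq_nonsing_inv _).symm
  rw [hinv, Matrix.invOf_fromBlocks₁₁_eq]
  have hblock : (Matrix.fromBlocks (⅟A + ⅟A * B * ⅟(C - Bᴴ * ⅟A * B) * Bᴴ * ⅟A)
      (-(⅟A * B * ⅟(C - Bᴴ * ⅟A * B))) (-(⅟(C - Bᴴ * ⅟A * B) * Bᴴ * ⅟A))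
      (⅟(C - Bᴴ * ⅟A * B))).toBlocks₁₁ = ⅟A + ⅟A * B * ⅟(C - Bᴴ * ⅟A * B) * Bᴴ * ⅟A :=
    Matrix.toBlocks_fromBlocks₁₁ _ _ _ _
  rw [hblock]
  have hiS : (⅟(C - Bᴴ * ⅟A * B) : Matrix (Fin m) (Fin m) ℂ) = (C - Bᴴ * A⁻¹ * B)⁻¹ := by
    rw [invOf_eq_nonsing_inv, hSeq]
  rw [hiS, hiA, add_sub_cancel_left]
  have hAinvH : A⁻¹ᴴ = A⁻¹ := hA.inv.isHermitian.eq
  have key : A⁻¹ * B * (C - Bᴴ * A⁻¹ * B)⁻¹ * Bᴴ * A⁻¹ =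
      (Bᴴ * A⁻¹)ᴴ * (C - Bᴴ * A⁻¹ * B)⁻¹ * (Bᴴ * A⁻¹) := by
    rw [Matrix.conjTranspose_mul, Matrix.conjTranspose_conjTranspose, hAinvH]
    rw [Matrix.mul_assoc, Matrix.mul_assoc, Matrix.mul_assoc]
  rw [key]
  exact hSinvPSD.conjTranspose_mul_mul_same _
end

section
/- Let Λ ⊂ ℝ^d be a bounded measurable set, let k : ℝ^d → ℂ be a bounded continuous function, and let G : Λ × Λ → ℂ be square integrable (G ∈ L²(Λ × Λ)). Then the function (x, y) ↦ k(x−y) + ∫_Λ k(x−u) k(u−y) du + ∫_Λ ∫_Λ k(x−u) G(u,v) k(v−y) du dv is a continuous function of (x, y) ∈ ℝ^d × ℝ^d. -/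
open MeasureTheory

/-- For a bounded measurable `Λ ⊂ ℝ^d`, a bounded continuous `k : ℝ^d → ℂ` and
`G ∈ L²(Λ × Λ)`, the kernel
`(x, y) ↦ k(x−y) + ∫_Λ k(x−u) k(u−y) du + ∫_Λ ∫_Λ k(x−u) G(u,v) k(v−y) du dv`
is continuous on `ℝ^d × ℝ^d`. -/
theorem kernel_continuous_of_L2_perturbation {d : ℕ}
    (Λ : Set (EuclideanSpace ℝ (Fin d)))
    (hΛm : MeasurableSet Λ) (hΛb : Bornology.IsBounded Λ)
    (k : EuclideanSpace ℝ (Fin d) → ℂ)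
    (hk : Continuous k) (hkb : ∃ C : ℝ, ∀ x, ‖k x‖ ≤ C)
    (G : EuclideanSpace ℝ (Fin d) → EuclideanSpace ℝ (Fin d) → ℂ)
    (hG : MemLp (fun p : EuclideanSpace ℝ (Fin d) × EuclideanSpace ℝ (Fin d) =>
      G p.1 p.2) 2 ((volume.restrict Λ).prod (volume.restrict Λ))) :
    Continuous (fun p : EuclideanSpace ℝ (Fin d) × EuclideanSpace ℝ (Fin d) =>
      k (p.1 - p.2) + (∫ u in Λ, k (p.1 - u) * k (u - p.2)) +
        ∫ u in Λ, ∫ v in Λ, k (p.1 - u) * G u v * k (v - p.2)) := by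
  obtain ⟨C, hC⟩ := hkb
  have hC0 : 0 ≤ C := le_trans (norm_nonneg _) (hC 0)
  have hE : True := trivial
  set μ : Measure (EuclideanSpace ℝ (Fin d)) := volume.restrict Λ with hμdef
  haveI hfin : IsFiniteMeasure μ := by
    constructor
    rw [hμdef, Measure.restrict_apply_univ]
    exact hΛb.measure_lt_top
  have hGint : Integrable (fun p : EuclideanSpace ℝ (Fin d) × EuclideanSpace ℝ (Fin d) => G p.1 p.2) (μ.prod μ) :=
    hG.integrable one_le_two
  have hae : ∀ᵐ u ∂μ, Integrable (fun v => G u v) μ := hGint.prod_right_ae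
  have hbnd : ∀ (a b : EuclideanSpace ℝ (Fin d)) (z : ℂ), ‖k a * z * k b‖ ≤ C * C * ‖z‖ := by
    intro a b z
    rw [norm_mul, norm_mul]
    calc ‖k a‖ * ‖z‖ * ‖k b‖ ≤ C * ‖z‖ * C := by
          gcongr <;> [exact hC a; exact hC b]
      _ = C * C * ‖z‖ := by ring
  have h1 : Continuous fun p : EuclideanSpace ℝ (Fin d) × EuclideanSpace ℝ (Fin d) => k (p.1 - p.2) :=
    hk.comp (continuous_fst.sub continuous_snd)
  have h2 : Continuous fun p : EuclideanSpace ℝ (Fin d) × EuclideanSpace ℝ (Fin d) => ∫ u, k (p.1 - u) * k (u - p.2) ∂μ := by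
    apply continuous_of_dominated (bound := fun _ => C * C)
    · intro p
      exact (((hk.comp (continuous_const.sub continuous_id)).mul
        (hk.comp (continuous_id.sub continuous_const)))).aestronglyMeasurable
    · intro p
      filter_upwards with u
      calc ‖k (p.1 - u) * k (u - p.2)‖ = ‖k (p.1 - u)‖ * ‖k (u - p.2)‖ := norm_mul _ _
        _ ≤ C * C := mul_le_mul (hC _) (hC _) (norm_nonneg _) hC0
    · exact integrable_const _
    · filter_upwards with u
      exact (hk.comp (continuous_fst.sub continuous_const)).mul
        (hk.comp (continuous_const.sub continuous_snd))
  have h3 : Continuous fun p : EuclideanSpace ℝ (Fin d) × EuclideanSpace ℝ (Fin d) =>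
      ∫ u, ∫ v, k (p.1 - u) * G u v * k (v - p.2) ∂μ ∂μ := by
    apply continuous_of_dominated (bound := fun u => C * C * ∫ v, ‖G u v‖ ∂μ)
    · intro p
      have hm : AEStronglyMeasurable
          (fun q : EuclideanSpace ℝ (Fin d) × EuclideanSpace ℝ (Fin d) => k (p.1 - q.1) * G q.1 q.2 * k (q.2 - p.2)) (μ.prod μ) := by
        refine (((hk.comp (continuous_const.sub continuous_fst)).aestronglyMeasurable.mul
          hG.aestronglyMeasurable).mul
          (hk.comp (continuous_snd.sub continuous_const)).aestronglyMeasurable)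
      exact hm.integral_prod_right'
    · intro p
      filter_upwards [hae] with u hu
      calc ‖∫ v, k (p.1 - u) * G u v * k (v - p.2) ∂μ‖
          ≤ ∫ v, C * C * ‖G u v‖ ∂μ := by
            apply norm_integral_le_of_norm_le ((hu.norm).const_mul (C * C))
            filter_upwards with v
            exact hbnd _ _ _
        _ = C * C * ∫ v, ‖G u v‖ ∂μ := integral_const_mul _ _
    · exact (hGint.integral_norm_prod_left).const_mul (C * C)
    · filter_upwards [hae] with u hu
      apply continuous_of_dominated (bound := fun v => C * C * ‖G u v‖)
      · intro p
        exact (aestronglyMeasurable_const.mul hu.1).mul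
          (hk.comp (continuous_id.sub continuous_const)).aestronglyMeasurable
      · intro p
        filter_upwards with v
        exact hbnd _ _ _
      · exact (hu.norm).const_mul (C * C)
      · filter_upwards with v
        exact ((hk.comp (continuous_fst.sub continuous_const)).mul continuous_const).mul
          (hk.comp (continuous_const.sub continuous_snd))
  exact (h1.add h2).add h3
end
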